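/- The cocktail party graph CP(n) with n = 2p vertices is resistance regular; in fact every diagonal entry of the Moore-Penrose inverse of its Laplacian equals (n²(2p−3) + 4(n−1) − 2p(n−2)) / (2n²(n−2)(p−1)). -/

import Mathlib

open Matrix BigOperators Finset

noncomputable def allOnes (V : Type*) : Matrix V V ℝ := Matrix.of fun _ _ => 1

/-- The resistance distance matrix of a connected graph, via the matrix
`X = (L + (1/n)J)⁻¹`: `r_ij = X_ii + X_jj - 2X_ij`. -/
noncomputable def resistMatrix {V : Type*} [Fintype V] [DecidableEq V]
    (G : SimpleGraph V) [DecidableRel G.Adj] : Matrix V V ℝ :=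
  Matrix.of fun i j =>
    (G.lapMatrix ℝ + (Fintype.card V : ℝ)⁻¹ • allOnes V)⁻¹ i i +
    (G.lapMatrix ℝ + (Fintype.card V : ℝ)⁻¹ • allOnes V)⁻¹ j j -
    2 * (G.lapMatrix ℝ + (Fintype.card V : ℝ)⁻¹ • allOnes V)⁻¹ i j

/-- `W` is the Moore-Penrose inverse of `L`. -/
def IsMoorePenrose {V : Type*} [Fintype V] [DecidableEq V] (L W : Matrix V V ℝ) : Prop :=
  L * W * L = L ∧ W * L * W = W ∧ (L * W)ᵀ = L * W ∧ (W * L)ᵀ = W * L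

/-- The cocktail party graph `CP(2p)`: `K_{2p}` minus a perfect matching. -/
def cocktailParty (p : ℕ) : SimpleGraph (Fin p × Fin 2) where
  Adj v w := v.1 ≠ w.1
  symm := ⟨fun _ _ h => h.symm⟩
  loopless := ⟨fun _ h => h rfl⟩

instance (p : ℕ) : DecidableRel (cocktailParty p).Adj :=
  fun v w => inferInstanceAs (Decidable (v.1 ≠ w.1))


noncomputable def Bm (p : ℕ) : Matrix (Fin p × Fin 2) (Fin p × Fin 2) ℝ :=
  Matrix.of fun i j => if i.1 = j.1 then 1 else 0

lemma card_block (p : ℕ) (x : Fin p) :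
    (Finset.univ.filter (fun w : Fin p × Fin 2 => w.1 = x)).card = 2 := by
  have h2 : Finset.univ.filter (fun w : Fin p × Fin 2 => w.1 = x) = {x} ×ˢ Finset.univ := by
    ext w
    simp only [Finset.mem_filter, Finset.mem_univ, true_and, Finset.mem_product,
      Finset.mem_singleton, and_true]
  rw [h2]; simp

lemma card_block' (p : ℕ) (x : Fin p) :
    (Finset.univ.filter (fun w : Fin p × Fin 2 => x = w.1)).card = 2 := by
  have : Finset.univ.filter (fun w : Fin p × Fin 2 => x = w.1)
      = Finset.univ.filter (fun w : Fin p × Fin 2 => w.1 = x) := by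
    apply Finset.filter_congr; intro w _; exact eq_comm
  rw [this]; exact card_block p x

lemma hJJ (p : ℕ) : allOnes (Fin p × Fin 2) * allOnes _ = (2*(p:ℝ)) • allOnes _ := by
  ext i j
  simp [allOnes, Matrix.mul_apply, Finset.card_univ, mul_comm]

lemma hBB (p : ℕ) : Bm p * Bm p = (2:ℝ) • Bm p := by
  ext i j
  simp [Bm, Matrix.mul_apply, Fintype.sum_prod_type, ite_and, Finset.sum_ite_eq, mul_ite, ite_mul]
  split <;> simp

lemma hJB (p : ℕ) : allOnes (Fin p × Fin 2) * Bm p = (2:ℝ) • allOnes _ := by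
  ext i j
  simp [Bm, allOnes, Matrix.mul_apply, Fintype.sum_prod_type, Finset.sum_ite_eq, card_block]

lemma hBJ (p : ℕ) : Bm p * allOnes (Fin p × Fin 2) = (2:ℝ) • allOnes _ := by
  ext i j
  simp [Bm, allOnes, Matrix.mul_apply, Fintype.sum_prod_type, Finset.sum_ite_eq, card_block']

lemma mul_combo (p : ℕ) (α β γ a b c : ℝ) :
    (α•(1:Matrix (Fin p × Fin 2) (Fin p × Fin 2) ℝ) + β•allOnes _ + γ•Bm p) *
      (a•1 + b•allOnes _ + c•Bm p)
    = (α*a)•1 + (α*b + β*a + 2*(p:ℝ)*β*b + 2*β*c + 2*γ*b)•allOnes _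
        + (α*c + γ*a + 2*γ*c)•Bm p := by
  simp only [Matrix.add_mul, Matrix.mul_add, Matrix.smul_mul, Matrix.mul_smul,
    hJJ, hBB, hJB, hBJ, Matrix.one_mul, Matrix.mul_one, smul_smul]
  module

lemma deg_cp (p : ℕ) (hp : 2 ≤ p) (v : Fin p × Fin 2) :
    ((cocktailParty p).degree v : ℝ) = 2*(p:ℝ) - 2 := by
  have h : (cocktailParty p).neighborFinset v = Finset.univ.filter (fun w => ¬ v.1 = w.1) := by
    ext w; rw [SimpleGraph.mem_neighborFinset]; simp [cocktailParty, ne_comm]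
  have : (cocktailParty p).degree v = 2*p - 2 := by
    rw [SimpleGraph.degree, h, Finset.filter_not, Finset.card_sdiff_of_subset (Finset.filter_subset _ _)]
    rw [card_block' p v.1]
    simp [Finset.card_univ, Nat.mul_comm]
  rw [this]
  have h3 : (2:ℕ) ≤ 2*p := by omega
  push_cast [Nat.cast_sub h3]
  ring

lemma hLdecomp (p : ℕ) (hp : 2 ≤ p) :
    (cocktailParty p).lapMatrix ℝ
      = (2*(p:ℝ)-2)•(1:Matrix (Fin p × Fin 2) (Fin p × Fin 2) ℝ)
        + (-1:ℝ)•allOnes _ + (1:ℝ)•Bm p := by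
  ext i j
  simp only [SimpleGraph.lapMatrix, SimpleGraph.degMatrix, SimpleGraph.adjMatrix,
    Matrix.sub_apply, Matrix.of_apply, Matrix.add_apply, Matrix.smul_apply,
    Matrix.one_apply, allOnes, Bm, smul_eq_mul]
  by_cases hij : i = j
  · subst hij
    have hd := deg_cp p hp i
    have hadj : ¬ (cocktailParty p).Adj i i := (cocktailParty p).loopless.irrefl i
    simp [hd, hadj]
  · by_cases h1 : i.1 = j.1
    · simp [hij, h1, cocktailParty]
    · simp [hij, h1, cocktailParty]

lemma mp_unique {V : Type*} [Fintype V] [DecidableEq V] {L W W' : Matrix V V ℝ}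
    (h : IsMoorePenrose L W) (h' : IsMoorePenrose L W') : W = W' := by
  obtain ⟨h1, h2, h3, h4⟩ := h
  obtain ⟨h1', h2', h3', h4'⟩ := h'
  have e1 : L * W = L * W' := by
    calc L * W = (L*W)ᵀ := h3.symm
    _ = Wᵀ * Lᵀ := by rw [Matrix.transpose_mul]
    _ = Wᵀ * (L*W'*L)ᵀ := by rw [h1']
    _ = Wᵀ * (Lᵀ * (L*W')ᵀ) := by rw [Matrix.transpose_mul (L*W') L]
    _ = Wᵀ * Lᵀ * (L*W') := by rw [h3', ← mul_assoc]
    _ = (L*W)ᵀ * (L*W') := by rw [Matrix.transpose_mul]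
    _ = (L*W) * (L*W') := by rw [h3]
    _ = (L*W*L)*W' := by noncomm_ring
    _ = L * W' := by rw [h1]
  have e2 : W * L = W' * L := by
    calc W * L = (W*L)ᵀ := h4.symm
    _ = Lᵀ * Wᵀ := by rw [Matrix.transpose_mul]
    _ = (L*W'*L)ᵀ * Wᵀ := by rw [h1']
    _ = (L*(W'*L))ᵀ * Wᵀ := by rw [mul_assoc]
    _ = ((W'*L)ᵀ * Lᵀ) * Wᵀ := by rw [Matrix.transpose_mul]
    _ = (W'*L) * Lᵀ * Wᵀ := by rw [h4']
    _ = (W'*L) * (W*L)ᵀ := by rw [mul_assoc, ← Matrix.transpose_mul]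
    _ = W'*L*(W*L) := by rw [h4]
    _ = W'*(L*W*L) := by rw [mul_assoc, ← mul_assoc L W L]
    _ = W' * L := by rw [h1]
  calc W = W*L*W := h2.symm
  _ = W'*L*W := by rw [e2]
  _ = W'*(L*W) := by rw [mul_assoc]
  _ = W'*(L*W') := by rw [e1]
  _ = W'*L*W' := by rw [← mul_assoc]
  _ = W' := h2'

noncomputable def W0 (p : ℕ) : Matrix (Fin p × Fin 2) (Fin p × Fin 2) ℝ :=
  (1/(2*(p:ℝ)-2)) • 1 + (-(1/(2*(p:ℝ))^2)) • allOnes _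
    + (1/(2*(2*(p:ℝ))) - 1/(2*(2*(p:ℝ)-2))) • Bm p

lemma hJsymm (p : ℕ) : (allOnes (Fin p × Fin 2))ᵀ = allOnes _ := by
  ext i j; rfl

lemma hW0mp (p : ℕ) (hp : 2 ≤ p) :
    IsMoorePenrose ((cocktailParty p).lapMatrix ℝ) (W0 p) := by
  have hq : (2:ℝ) ≤ (p:ℝ) := by exact_mod_cast hp
  have h1 : (2*(p:ℝ)-2) ≠ 0 := by nlinarith
  have h2 : (2*(p:ℝ)) ≠ 0 := by nlinarith
  have hp1 : (p:ℝ) - 1 ≠ 0 := by linarith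
  have hJc : allOnes (Fin p × Fin 2)
      = (0:ℝ)•(1:Matrix (Fin p × Fin 2) (Fin p × Fin 2) ℝ) + (1:ℝ)•allOnes _ + (0:ℝ)•Bm p := by
    simp
  have hLW : (cocktailParty p).lapMatrix ℝ * W0 p
      = 1 - (1/(2*(p:ℝ))) • allOnes _ := by
    rw [hLdecomp p hp, W0, mul_combo]
    have c1 : (2*(p:ℝ)-2)*(1/(2*(p:ℝ)-2)) = 1 := by field_simp
    have cJ : (2*(p:ℝ)-2)*(-(1/(2*(p:ℝ))^2)) + (-1)*(1/(2*(p:ℝ)-2))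
        + 2*(p:ℝ)*(-1)*(-(1/(2*(p:ℝ))^2)) + 2*(-1)*(1/(2*(2*(p:ℝ))) - 1/(2*(2*(p:ℝ)-2)))
        + 2*1*(-(1/(2*(p:ℝ))^2)) = -(1/(2*(p:ℝ))) := by
      field_simp
      ring
    have cB : (2*(p:ℝ)-2)*(1/(2*(2*(p:ℝ))) - 1/(2*(2*(p:ℝ)-2))) + 1*(1/(2*(p:ℝ)-2))
        + 2*1*(1/(2*(2*(p:ℝ))) - 1/(2*(2*(p:ℝ)-2))) = 0 := by
      field_simp
      ring
    rw [c1, cJ, cB]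
    simp [sub_eq_add_neg]
  have hWL : W0 p * (cocktailParty p).lapMatrix ℝ
      = 1 - (1/(2*(p:ℝ))) • allOnes _ := by
    rw [hLdecomp p hp, W0, mul_combo]
    have c1 : (1/(2*(p:ℝ)-2))*(2*(p:ℝ)-2) = 1 := by field_simp
    have cJ : (1/(2*(p:ℝ)-2))*(-1) + (-(1/(2*(p:ℝ))^2))*(2*(p:ℝ)-2)
        + 2*(p:ℝ)*(-(1/(2*(p:ℝ))^2))*(-1) + 2*(-(1/(2*(p:ℝ))^2))*1
        + 2*(1/(2*(2*(p:ℝ))) - 1/(2*(2*(p:ℝ)-2)))*(-1) = -(1/(2*(p:ℝ))) := by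
      field_simp
      ring
    have cB : (1/(2*(p:ℝ)-2))*1 + (1/(2*(2*(p:ℝ))) - 1/(2*(2*(p:ℝ)-2)))*(2*(p:ℝ)-2)
        + 2*(1/(2*(2*(p:ℝ))) - 1/(2*(2*(p:ℝ)-2)))*1 = 0 := by
      field_simp
      ring
    rw [c1, cJ, cB]
    simp [sub_eq_add_neg]
  have hJL : allOnes (Fin p × Fin 2) * (cocktailParty p).lapMatrix ℝ = 0 := by
    rw [hLdecomp p hp]
    nth_rewrite 1 [hJc]
    rw [mul_combo]
    have cJ : 0*(-1) + 1*(2*(p:ℝ)-2) + 2*(p:ℝ)*1*(-1) + 2*1*1 + 2*0*(-1) = 0 := by ring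
    have c1 : (0:ℝ)*(2*(p:ℝ)-2) = 0 := by ring
    have cB : (0:ℝ)*1 + 0*(2*(p:ℝ)-2) + 2*0*1 = 0 := by ring
    rw [cJ]
    simp
  have hJW : allOnes (Fin p × Fin 2) * W0 p = 0 := by
    rw [W0]
    nth_rewrite 1 [hJc]
    rw [mul_combo]
    have cJ : 0*(-(1/(2*(p:ℝ))^2)) + 1*(1/(2*(p:ℝ)-2)) + 2*(p:ℝ)*1*(-(1/(2*(p:ℝ))^2))
        + 2*1*(1/(2*(2*(p:ℝ))) - 1/(2*(2*(p:ℝ)-2))) + 2*0*(-(1/(2*(p:ℝ))^2)) = 0 := by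
      field_simp
      ring
    have c1 : (0:ℝ)*(1/(2*(p:ℝ)-2)) = 0 := by ring
    have cB : (0:ℝ)*(1/(2*(2*(p:ℝ))) - 1/(2*(2*(p:ℝ)-2)))
        + 0*(1/(2*(p:ℝ)-2)) + 2*0*(1/(2*(2*(p:ℝ))) - 1/(2*(2*(p:ℝ)-2))) = 0 := by ring
    rw [cJ]
    simp
  refine ⟨?_, ?_, ?_, ?_⟩
  · rw [hLW, Matrix.sub_mul, Matrix.one_mul, Matrix.smul_mul, hJL, smul_zero, sub_zero]
  · rw [hWL, Matrix.sub_mul, Matrix.one_mul, Matrix.smul_mul, hJW, smul_zero, sub_zero]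
  · rw [hLW, Matrix.transpose_sub, Matrix.transpose_one, Matrix.transpose_smul, hJsymm]
  · rw [hWL, Matrix.transpose_sub, Matrix.transpose_one, Matrix.transpose_smul, hJsymm]

lemma W0_apply (p : ℕ) (i j : Fin p × Fin 2) :
    W0 p i j = (1/(2*(p:ℝ)-2)) * (if i = j then 1 else 0) + (-(1/(2*(p:ℝ))^2))
      + (1/(2*(2*(p:ℝ))) - 1/(2*(2*(p:ℝ)-2))) * (if i.1 = j.1 then 1 else 0) := by
  simp [W0, Matrix.add_apply, Matrix.smul_apply, Matrix.one_apply, allOnes, Bm,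
    smul_eq_mul, mul_ite]

lemma W0_diag (p : ℕ) (i : Fin p × Fin 2) :
    W0 p i i = (1/(2*(p:ℝ)-2)) + (-(1/(2*(p:ℝ))^2))
      + (1/(2*(2*(p:ℝ))) - 1/(2*(2*(p:ℝ)-2))) := by
  simp [W0_apply]

lemma W0_rowsum (p : ℕ) (i : Fin p × Fin 2) :
    ∑ k, W0 p i k = (1/(2*(p:ℝ)-2)) + (2*(p:ℝ))*(-(1/(2*(p:ℝ))^2))
      + 2*(1/(2*(2*(p:ℝ))) - 1/(2*(2*(p:ℝ)-2))) := by
  simp only [W0_apply]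
  rw [Finset.sum_add_distrib, Finset.sum_add_distrib]
  have e1 : ∑ k : Fin p × Fin 2, (1/(2*(p:ℝ)-2)) * (if i = k then 1 else 0)
      = 1/(2*(p:ℝ)-2) := by
    simp [mul_ite, Finset.sum_ite_eq]
  have e2 : ∑ _k : Fin p × Fin 2, (-(1/(2*(p:ℝ))^2)) = (2*(p:ℝ))*(-(1/(2*(p:ℝ))^2)) := by
    rw [Finset.sum_const, Finset.card_univ, Fintype.card_prod, Fintype.card_fin,
      Fintype.card_fin, nsmul_eq_mul]
    push_cast
    ring
  have e3 : ∑ k : Fin p × Fin 2, (1/(2*(2*(p:ℝ))) - 1/(2*(2*(p:ℝ)-2))) * (if i.1 = k.1 then 1 else 0)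
      = 2*(1/(2*(2*(p:ℝ))) - 1/(2*(2*(p:ℝ)-2))) := by
    rw [Fintype.sum_prod_type]
    simp [mul_ite, Finset.sum_ite_eq]
    ring
  rw [e1, e2, e3]

theorem cocktailParty_resistanceRegular (p : ℕ) (hp : 2 ≤ p)
    (W : Matrix (Fin p × Fin 2) (Fin p × Fin 2) ℝ)
    (hW : IsMoorePenrose ((cocktailParty p).lapMatrix ℝ) W) :
    (∀ i, W i i =
        ((2 * (p : ℝ)) ^ 2 * (2 * (p : ℝ) - 3) + 4 * (2 * (p : ℝ) - 1) -
            2 * (p : ℝ) * (2 * (p : ℝ) - 2)) /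
          (2 * (2 * (p : ℝ)) ^ 2 * (2 * (p : ℝ) - 2) * ((p : ℝ) - 1))) ∧
    (∀ i j : Fin p × Fin 2,
      ∑ k, (W i i + W k k - 2 * W i k) = ∑ k, (W j j + W k k - 2 * W j k)) := by
  have hWeq : W = W0 p := mp_unique hW (hW0mp p hp)
  subst hWeq
  have hq : (2:ℝ) ≤ (p:ℝ) := by exact_mod_cast hp
  have h1 : (2*(p:ℝ)-2) ≠ 0 := by nlinarith
  have h2 : (2*(p:ℝ)) ≠ 0 := by nlinarith
  have h3 : ((p:ℝ)-1) ≠ 0 := by nlinarith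
  constructor
  · intro i
    rw [W0_diag]
    field_simp
    ring
  · intro i j
    have key : ∀ m : Fin p × Fin 2, ∑ k, (W0 p m m + W0 p k k - 2 * W0 p m k)
        = (2*(p:ℝ)) * ((1/(2*(p:ℝ)-2)) + (-(1/(2*(p:ℝ))^2))
            + (1/(2*(2*(p:ℝ))) - 1/(2*(2*(p:ℝ)-2))))
          + (∑ k, W0 p k k)
          - 2 * ((1/(2*(p:ℝ)-2)) + (2*(p:ℝ))*(-(1/(2*(p:ℝ))^2))
            + 2*(1/(2*(2*(p:ℝ))) - 1/(2*(2*(p:ℝ)-2)))) := by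
      intro m
      rw [Finset.sum_sub_distrib, Finset.sum_add_distrib, ← Finset.mul_sum, W0_rowsum,
        Finset.sum_const, Finset.card_univ, W0_diag]
      simp [Fintype.card_prod, nsmul_eq_mul]
      ring
    rw [key i, key j]
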